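/- For n ≥ 2, the distinguishing number of the book graph B_n = K_{1,n} □ P_2 equals ⌈√n⌉. -/

import Mathlib

open SimpleGraph

/-- A vertex labeling with `d` labels is distinguishing if the only automorphism
preserving it is the identity. -/
def IsDistinguishing {V : Type*} (G : SimpleGraph V) {d : ℕ} (c : V → Fin d) : Prop :=
  ∀ φ : G ≃g G, (∀ v, c (φ v) = c v) → ∀ v, φ v = v

/-- The distinguishing number of a graph. -/
noncomputable def distinguishingNumber {V : Type*} (G : SimpleGraph V) : ℕ :=
  sInf {d : ℕ | ∃ c : V → Fin d, IsDistinguishing G c}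

/-- An edge labeling with `d` labels is distinguishing if the only automorphism
preserving it is the identity. -/
def IsDistinguishingEdge {V : Type*} (G : SimpleGraph V) {d : ℕ} (c : G.edgeSet → Fin d) : Prop :=
  ∀ φ : G ≃g G, (∀ e, c (φ.mapEdgeSet e) = c e) → ∀ v, φ v = v

/-- The distinguishing index of a graph. -/
noncomputable def distinguishingIndex {V : Type*} (G : SimpleGraph V) : ℕ :=
  sInf {d : ℕ | ∃ c : G.edgeSet → Fin d, IsDistinguishingEdge G c}

/-- The friendship graph `F n`: `n` triangles glued at a common central vertex `none`. -/
def friendshipGraph (n : ℕ) : SimpleGraph (Option (Fin n × Fin 2)) :=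
  SimpleGraph.fromRel (fun u v =>
    u = none ∨ ∃ i a b, u = some (i, a) ∧ v = some (i, b))

/-- The book graph `B n = K_{1,n} □ P₂`. -/
def bookGraph (n : ℕ) : SimpleGraph ((Fin 1 ⊕ Fin n) × Fin 2) :=
  (completeBipartiteGraph (Fin 1) (Fin n)) □ (SimpleGraph.pathGraph 2)

/-- The corona product `G ∘ H`: one copy of `G`, a copy of `H` for each vertex `v` of `G`,
with `v` joined to every vertex of its copy of `H`. -/
def coronaProduct {V W : Type*} (G : SimpleGraph V) (H : SimpleGraph W) :
    SimpleGraph (V ⊕ V × W) :=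
  SimpleGraph.fromRel (fun a b =>
    (∃ u v, a = Sum.inl u ∧ b = Sum.inl v ∧ G.Adj u v) ∨
    (∃ v w w', a = Sum.inr (v, w) ∧ b = Sum.inr (v, w') ∧ H.Adj w w') ∨
    (∃ v w, a = Sum.inl v ∧ b = Sum.inr (v, w)))

/-- the other element of Fin 2 -/
def ot (t : Fin 2) : Fin 2 := 1 - t

lemma ot_ne (t : Fin 2) : ot t ≠ t := by fin_cases t <;> decide

lemma ot_ot (t : Fin 2) : ot (ot t) = t := by fin_cases t <;> decide

lemma ne_iff_ot {a t : Fin 2} : a ≠ t ↔ a = ot t := by fin_cases a <;> fin_cases t <;> decide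

lemma path2_adj (a b : Fin 2) : (SimpleGraph.pathGraph 2).Adj a b ↔ a ≠ b := by
  rw [pathGraph_adj, ne_eq, Fin.ext_iff]
  have := a.isLt; have := b.isLt
  omega

lemma book_adj_leaf {n : ℕ} (i : Fin n) (t : Fin 2) (y : (Fin 1 ⊕ Fin n) × Fin 2) :
    (bookGraph n).Adj (Sum.inr i, t) y ↔ y = (Sum.inl 0, t) ∨ y = (Sum.inr i, ot t) := by
  obtain ⟨b, s⟩ := y
  simp only [bookGraph, boxProd_adj, completeBipartiteGraph_adj, path2_adj, Prod.mk.injEq]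
  cases b with
  | inl a =>
    have : a = 0 := Fin.eq_zero a
    subst this
    constructor
    · rintro (⟨h1, h2⟩ | ⟨h1, h2⟩) <;> simp_all
    · rintro (⟨h1, h2⟩ | ⟨h1, h2⟩) <;> simp_all
  | inr j =>
    constructor
    · rintro (⟨h1, h2⟩ | ⟨h1, h2⟩) <;> simp_all [ne_iff_ot, ot_ot, eq_comm (a := t)]
    · rintro (⟨h1, h2⟩ | ⟨h1, h2⟩) <;> simp_all [ne_iff_ot, ot_ne, ot_ot]

lemma book_adj_ctr {n : ℕ} (t : Fin 2) (y : (Fin 1 ⊕ Fin n) × Fin 2) :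
    (bookGraph n).Adj (Sum.inl 0, t) y ↔ y = (Sum.inl 0, ot t) ∨ ∃ j, y = (Sum.inr j, t) := by
  obtain ⟨b, s⟩ := y
  simp only [bookGraph, boxProd_adj, completeBipartiteGraph_adj, path2_adj, Prod.mk.injEq]
  cases b with
  | inl a =>
    have : a = 0 := Fin.eq_zero a
    subst this
    constructor
    · rintro (⟨h1, h2⟩ | ⟨h1, h2⟩) <;> simp_all [ne_iff_ot, ot_ot, eq_comm (a := t)]
    · rintro (⟨h1, h2⟩ | h) <;> simp_all [ot_ne, ne_iff_ot, ot_ot]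
  | inr j =>
    constructor
    · rintro (⟨h1, h2⟩ | ⟨h1, h2⟩) <;> simp_all
    · rintro (⟨h1, h2⟩ | h) <;> simp_all

lemma center_to_center {n : ℕ} (hn : 2 ≤ n) (φ : bookGraph n ≃g bookGraph n) (t : Fin 2) :
    ∃ s, φ (Sum.inl 0, t) = (Sum.inl 0, s) := by
  rcases hφ : φ (Sum.inl 0, t) with ⟨b, s⟩
  cases b with
  | inl a => exact ⟨s, by simpa [Fin.eq_zero a] using hφ⟩
  | inr i =>
    exfalso
    -- three distinct neighbors of the center
    have i0 : Fin n := ⟨0, by omega⟩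
    set x1 : (Fin 1 ⊕ Fin n) × Fin 2 := (Sum.inl 0, ot t)
    set x2 : (Fin 1 ⊕ Fin n) × Fin 2 := (Sum.inr (⟨0, by omega⟩ : Fin n), t)
    set x3 : (Fin 1 ⊕ Fin n) × Fin 2 := (Sum.inr (⟨1, by omega⟩ : Fin n), t)
    have hadj : ∀ x ∈ [x1, x2, x3], (bookGraph n).Adj (Sum.inl 0, t) x := by
      intro x hx
      rw [book_adj_ctr]
      simp only [List.mem_cons, List.mem_singleton] at hx
      rcases hx with rfl | rfl | rfl | h
      · exact Or.inl rfl
      · exact Or.inr ⟨_, rfl⟩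
      · exact Or.inr ⟨_, rfl⟩
      · simp at h
    have key : ∀ x ∈ [x1, x2, x3],
        φ x = (Sum.inl 0, s) ∨ φ x = (Sum.inr i, ot s) := by
      intro x hx
      have : (bookGraph n).Adj (φ (Sum.inl 0, t)) (φ x) := φ.map_adj_iff.mpr (hadj x hx)
      rw [hφ, book_adj_leaf] at this
      exact this
    have h1 := key x1 (by simp)
    have h2 := key x2 (by simp)
    have h3 := key x3 (by simp)
    have d12 : x1 ≠ x2 := by simp [x1, x2]
    have d13 : x1 ≠ x3 := by simp [x1, x3]
    have d23 : x2 ≠ x3 := by simp [x2, x3, Fin.ext_iff]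
    rcases h1 with h1 | h1 <;> rcases h2 with h2 | h2 <;> rcases h3 with h3 | h3 <;>
      first
        | exact d12 (φ.injective (h1.trans h2.symm))
        | exact d13 (φ.injective (h1.trans h3.symm))
        | exact d23 (φ.injective (h2.trans h3.symm))

/-- clean characterization of adjacency in the book graph -/
lemma book_adj_iff {n : ℕ} (x y : (Fin 1 ⊕ Fin n) × Fin 2) :
    (bookGraph n).Adj x y ↔
      (x.1.isLeft ∧ y.1.isRight ∨ x.1.isRight ∧ y.1.isLeft) ∧ x.2 = y.2 ∨
        x.2 ≠ y.2 ∧ x.1 = y.1 := by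
  simp only [bookGraph, boxProd_adj, completeBipartiteGraph_adj, path2_adj]
  try tauto

/-- the function swapping leaves `i` and `j` on the hub-or-leaf component -/
def swapAux {n : ℕ} (i j : Fin n) : Fin 1 ⊕ Fin n → Fin 1 ⊕ Fin n
  | Sum.inl a => Sum.inl a
  | Sum.inr k => Sum.inr (if k = i then j else if k = j then i else k)

lemma swapAux_invol {n : ℕ} (i j : Fin n) : Function.Involutive (swapAux i j) := by
  rintro (a | k)
  · rfl
  · simp only [swapAux]
    split_ifs <;> simp_all [swapAux]

/-- the function swapping leaves `i` and `j` -/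
def swapFun {n : ℕ} (i j : Fin n) :
    (Fin 1 ⊕ Fin n) × Fin 2 → (Fin 1 ⊕ Fin n) × Fin 2 :=
  Prod.map (swapAux i j) id

lemma swapFun_invol {n : ℕ} (i j : Fin n) : Function.Involutive (swapFun i j) := by
  rintro ⟨a, t⟩
  simp [swapFun, swapAux_invol i j a]

lemma swapAux_isLeft {n : ℕ} (i j : Fin n) (a : Fin 1 ⊕ Fin n) :
    (swapAux i j a).isLeft = a.isLeft := by rcases a with a | k <;> rfl

lemma swapAux_isRight {n : ℕ} (i j : Fin n) (a : Fin 1 ⊕ Fin n) :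
    (swapAux i j a).isRight = a.isRight := by rcases a with a | k <;> rfl

/-- the automorphism of the book graph swapping leaves `i` and `j` -/
def leafSwap {n : ℕ} (i j : Fin n) : bookGraph n ≃g bookGraph n where
  toEquiv := (swapFun_invol i j).toPerm
  map_rel_iff' := by
    intro x y
    simp only [Function.Involutive.coe_toPerm]
    rw [book_adj_iff, book_adj_iff]
    rcases x with ⟨a, t⟩; rcases y with ⟨b, s⟩
    simp only [swapFun, Prod.map, id_eq, swapAux_isLeft, swapAux_isRight,
      (swapAux_invol i j).injective.eq_iff]

/-- the distinguishing coloring of the book graph -/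
def bookColoring {n d : ℕ} (hd2 : 2 ≤ d) (hnd : n ≤ d * d) :
    (Fin 1 ⊕ Fin n) × Fin 2 → Fin d
  | (Sum.inl _, t) => if t = 0 then ⟨0, by omega⟩ else ⟨1, by omega⟩
  | (Sum.inr i, t) =>
      if t = 0 then ⟨i / d, by rw [Nat.div_lt_iff_lt_mul (by omega)]; exact lt_of_lt_of_le i.isLt hnd⟩
      else ⟨i % d, Nat.mod_lt _ (by omega)⟩

lemma bookColoring_distinguishing {n d : ℕ} (hn : 2 ≤ n) (hd2 : 2 ≤ d) (hnd : n ≤ d * d) :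
    IsDistinguishing (bookGraph n) (bookColoring hd2 hnd) := by
  intro φ hc
  -- centers are fixed
  have hct : ∀ t, φ (Sum.inl 0, t) = (Sum.inl 0, t) := by
    intro t
    obtain ⟨s, hs⟩ := center_to_center hn φ t
    have hcol := hc (Sum.inl 0, t)
    rw [hs] at hcol
    have : s = t := by
      revert hcol; fin_cases s <;> fin_cases t <;> simp [bookColoring, Fin.ext_iff]
    rw [hs, this]
  -- leaves are fixed
  have hlf : ∀ (i : Fin n) (t : Fin 2), φ (Sum.inr i, t) = (Sum.inr i, t) := by
    intro i t
    have key : ∀ t : Fin 2, ∃ j, φ (Sum.inr i, t) = (Sum.inr j, t) := by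
      intro t
      have hadj : (bookGraph n).Adj (Sum.inl 0, t) (Sum.inr i, t) := by
        rw [book_adj_ctr]; exact Or.inr ⟨i, rfl⟩
      have : (bookGraph n).Adj (Sum.inl 0, t) (φ (Sum.inr i, t)) := by
        have := φ.map_adj_iff.mpr hadj
        rwa [hct t] at this
      rw [book_adj_ctr] at this
      rcases this with h | ⟨j, hj⟩
      · exfalso
        rw [← hct (ot t)] at h
        have := φ.injective h
        simp at this
      · exact ⟨j, hj⟩
    obtain ⟨j0, hj0⟩ := key 0
    obtain ⟨j1, hj1⟩ := key 1
    have hadj01 : (bookGraph n).Adj (Sum.inr i, 0) (Sum.inr i, 1) := by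
      rw [book_adj_leaf]; right; rfl
    have him : (bookGraph n).Adj (Sum.inr j0, (0 : Fin 2)) (Sum.inr j1, (1 : Fin 2)) := by
      have := φ.map_adj_iff.mpr hadj01
      rwa [hj0, hj1] at this
    rw [book_adj_leaf] at him
    have hj10 : j1 = j0 := by
      rcases him with h | h
      · simp at h
      · simp only [Prod.mk.injEq, Sum.inr.injEq] at h
        exact h.1
    subst hj10
    -- colors force j1 = i
    have hc0 := hc (Sum.inr i, 0)
    have hc1 := hc (Sum.inr i, 1)
    rw [hj0] at hc0
    rw [hj1] at hc1
    have hc0' : (j1 : ℕ) / d = (i : ℕ) / d := by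
      have h := congrArg Fin.val hc0
      simpa [bookColoring] using h
    have hc1' : (j1 : ℕ) % d = (i : ℕ) % d := by
      have h := congrArg Fin.val hc1
      simpa [bookColoring] using h
    have hji : j1 = i := by
      have e1 := Nat.div_add_mod (j1 : ℕ) d
      have e2 := Nat.div_add_mod (i : ℕ) d
      have : (j1 : ℕ) = (i : ℕ) := by rw [← e1, hc0', hc1', e2]
      exact Fin.ext this
    subst hji
    fin_cases t
    · exact hj0
    · exact hj1
  rintro ⟨a | i, t⟩
  · rw [Fin.eq_zero a]; exact hct t
  · exact hlf i t

lemma card_le_of_distinguishing {n d : ℕ} (hn : 2 ≤ n) (c : (Fin 1 ⊕ Fin n) × Fin 2 → Fin d)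
    (hdist : IsDistinguishing (bookGraph n) c) : n ≤ d * d := by
  by_contra h
  push_neg at h
  have hcard : Fintype.card (Fin d × Fin d) < Fintype.card (Fin n) := by
    simpa using h
  obtain ⟨i, j, hij, hpair⟩ := Fintype.exists_ne_map_eq_of_card_lt
    (fun i : Fin n => (c (Sum.inr i, 0), c (Sum.inr i, 1))) hcard
  simp only [Prod.mk.injEq] at hpair
  have hpres : ∀ v, c (leafSwap i j v) = c v := by
    rintro ⟨a | k, t⟩
    · rfl
    · show c (swapFun i j (Sum.inr k, t)) = _
      simp only [swapFun, swapAux, Prod.map, id_eq]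
      split_ifs with h1 h2
      · subst h1; fin_cases t
        · exact hpair.1.symm
        · exact hpair.2.symm
      · subst h2; fin_cases t
        · exact hpair.1
        · exact hpair.2
      · rfl
  have := hdist (leafSwap i j) hpres (Sum.inr i, 0)
  have heq0 : swapFun i j (Sum.inr i, (0 : Fin 2)) = (Sum.inr j, (0 : Fin 2)) := by
    simp [swapFun, swapAux]
  have heq : leafSwap i j (Sum.inr i, (0 : Fin 2)) = (Sum.inr j, (0 : Fin 2)) := heq0
  rw [heq] at this
  simp only [Prod.mk.injEq, Sum.inr.injEq] at this
  exact hij this.1.symm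

theorem book_distinguishingNumber (n : ℕ) (hn : 2 ≤ n) :
    distinguishingNumber (bookGraph n) = ⌈Real.sqrt n⌉₊ := by
  set D := ⌈Real.sqrt (n : ℝ)⌉₊ with hD
  have hsq : Real.sqrt n ≤ D := Nat.le_ceil _
  have hnD : n ≤ D * D := by
    have h0 : (0:ℝ) ≤ Real.sqrt n := Real.sqrt_nonneg _
    have hr : (n:ℝ) ≤ (D : ℝ) * D := by
      calc (n:ℝ) = Real.sqrt n * Real.sqrt n := (Real.mul_self_sqrt (by positivity)).symm
        _ ≤ (D : ℝ) * D := mul_self_le_mul_self h0 hsq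
    exact_mod_cast hr
  have hD2 : 2 ≤ D := by
    by_contra h
    push_neg at h
    have : D * D ≤ 1 * 1 := Nat.mul_le_mul (by omega) (by omega)
    omega
  have hmem : D ∈ {d : ℕ | ∃ c : (Fin 1 ⊕ Fin n) × Fin 2 → Fin d, IsDistinguishing (bookGraph n) c} :=
    ⟨bookColoring hD2 hnD, bookColoring_distinguishing hn hD2 hnD⟩
  apply le_antisymm
  · exact Nat.sInf_le hmem
  · apply le_csInf ⟨D, hmem⟩
    rintro d ⟨c, hc⟩
    have hnd : n ≤ d * d := card_le_of_distinguishing hn c hc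
    rw [hD]
    apply Nat.ceil_le.mpr
    calc Real.sqrt n ≤ Real.sqrt ((d : ℝ) * d) := Real.sqrt_le_sqrt (by exact_mod_cast hnd)
      _ = d := Real.sqrt_mul_self (by positivity)
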